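/- Suppose 0 < γ ≤ 2/(μ + L). Then for every k ≥ 0 the IAG iterates satisfy dist_{k+1}² ≤ (1 − 2γμL/(μ + L)) · dist_k² + E_k, where E_k = γ²‖e^k‖² − 2γ·⟨x^k − x* − γ∇f(x^k), e^k⟩. -/

import Mathlib

open RealInnerProductSpace

section Helpers

variable {H : Type*} [NormedAddCommGroup H] [InnerProductSpace ℝ H] [CompleteSpace H]

/-- derivative along a line -/
lemma iag_hasDerivAt_line {ψ : H → ℝ} {G a w : H} {t : ℝ}
    (hG : HasGradientAt ψ G (a + t • w)) :
    HasDerivAt (fun s : ℝ => ψ (a + s • w)) ⟪G, w⟫ t := by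
  have hc : HasDerivAt (fun s : ℝ => a + s • w) w t := by
    simpa using (((hasDerivAt_id t).smul_const w).const_add a)
  have := (hasGradientAt_iff_hasFDerivAt.mp hG).comp_hasDerivAt t hc
  simp only [InnerProductSpace.toDual_apply_apply] at this
  exact this

/-- first-order condition for convex functions -/
lemma iag_foc {ψ : H → ℝ} {G : H → H} (hG : ∀ p, HasGradientAt ψ (G p) p)
    (hc : ConvexOn ℝ Set.univ ψ) (a b : H) :
    ψ a + ⟪G a, b - a⟫ ≤ ψ b := by
  set w := b - a with hw
  have hline : ConvexOn ℝ Set.univ (fun t : ℝ => ψ (a + t • w)) := by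
    have h1 := hc.comp_affineMap (AffineMap.lineMap a b)
    have h2 : (fun t : ℝ => ψ (a + t • w)) = ψ ∘ (AffineMap.lineMap a b) := by
      funext t
      simp [AffineMap.lineMap_apply, hw, add_comm]
    rw [h2]
    simpa using h1
  have hd : HasDerivAt (fun t : ℝ => ψ (a + t • w)) ⟪G (a + (0:ℝ) • w), w⟫ 0 :=
    iag_hasDerivAt_line (hG _)
  have hslope := hline.le_slope_of_hasDerivAt (Set.mem_univ (0:ℝ)) (Set.mem_univ (1:ℝ))
    one_pos hd
  have h0 : a + (0:ℝ) • w = a := by simp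
  have h1 : a + (1:ℝ) • w = b := by simp [hw]
  rw [h0] at hslope
  simp only [slope_def_field] at hslope
  rw [h0, h1] at hslope
  have : ⟪G a, w⟫ ≤ ψ b - ψ a := by
    simpa [div_one] using hslope
  linarith

/-- descent lemma -/
lemma iag_descent {ψ : H → ℝ} {G : H → H} (hG : ∀ p, HasGradientAt ψ (G p) p)
    {ℓ : ℝ} (hℓ : 0 ≤ ℓ) (hlip : ∀ p q, ‖G p - G q‖ ≤ ℓ * ‖p - q‖) (a b : H) :
    ψ b ≤ ψ a + ⟪G a, b - a⟫ + ℓ / 2 * ‖b - a‖ ^ 2 := by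
  set w := b - a with hw
  set Φ : ℝ → ℝ := fun t => ψ (a + t • w) - t * ⟪G a, w⟫ - ℓ / 2 * t ^ 2 * ‖w‖ ^ 2 with hΦ
  have hder : ∀ t : ℝ, HasDerivAt Φ
      (⟪G (a + t • w), w⟫ - ⟪G a, w⟫ - ℓ * t * ‖w‖ ^ 2) t := by
    intro t
    have h1 := iag_hasDerivAt_line (ψ := ψ) (hG (a + t • w))
    have h2 : HasDerivAt (fun s : ℝ => s * ⟪G a, w⟫) ⟪G a, w⟫ t := by
      simpa using (hasDerivAt_id t).mul_const ⟪G a, w⟫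
    have h3 : HasDerivAt (fun s : ℝ => ℓ / 2 * s ^ 2 * ‖w‖ ^ 2)
        (ℓ * t * ‖w‖ ^ 2) t := by
      have := ((hasDerivAt_pow 2 t).const_mul (ℓ / 2)).mul_const (‖w‖ ^ 2)
      exact this.congr_deriv (by rw [show (2:ℕ) - 1 = 1 from rfl]; push_cast; ring)
    exact (h1.sub h2).sub h3
  have hΦdiff : Differentiable ℝ Φ := fun t => (hder t).differentiableAt
  have hmono : AntitoneOn Φ (Set.Icc (0:ℝ) 1) := by
    apply antitoneOn_of_deriv_nonpos (convex_Icc 0 1)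
      hΦdiff.continuous.continuousOn
      (fun t _ => (hΦdiff t).differentiableWithinAt)
    intro t ht
    rw [interior_Icc] at ht
    rw [(hder t).deriv]
    have hbd : ⟪G (a + t • w) - G a, w⟫ ≤ ℓ * t * ‖w‖ ^ 2 := by
      calc ⟪G (a + t • w) - G a, w⟫ ≤ ‖G (a + t • w) - G a‖ * ‖w‖ :=
            real_inner_le_norm _ _
        _ ≤ (ℓ * ‖a + t • w - a‖) * ‖w‖ :=
            mul_le_mul_of_nonneg_right (hlip _ _) (norm_nonneg w)
        _ = ℓ * t * ‖w‖ ^ 2 := by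
            rw [add_sub_cancel_left, norm_smul, Real.norm_eq_abs,
              abs_of_pos ht.1]
            ring
    have hin : ⟪G (a + t • w) - G a, w⟫ = ⟪G (a + t • w), w⟫ - ⟪G a, w⟫ :=
      inner_sub_left _ _ _
    linarith
  have hle : Φ 1 ≤ Φ 0 :=
    hmono (Set.mem_Icc.mpr ⟨le_refl 0, zero_le_one⟩)
      (Set.mem_Icc.mpr ⟨zero_le_one, le_refl 1⟩) zero_le_one
  have hΦ0 : Φ 0 = ψ a := by simp [hΦ]
  have hΦ1 : Φ 1 = ψ b - ⟪G a, w⟫ - ℓ / 2 * ‖w‖ ^ 2 := by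
    simp [hΦ, hw]
  rw [hΦ0, hΦ1] at hle
  linarith

/-- half cocoercivity -/
lemma iag_coco_half {ψ : H → ℝ} {G : H → H} (hG : ∀ p, HasGradientAt ψ (G p) p)
    (hc : ConvexOn ℝ Set.univ ψ) {ℓ : ℝ} (hℓ : 0 < ℓ)
    (hdesc : ∀ a b, ψ b ≤ ψ a + ⟪G a, b - a⟫ + ℓ / 2 * ‖b - a‖ ^ 2) (a b : H) :
    1 / (2 * ℓ) * ‖G b - G a‖ ^ 2 ≤ ψ b - ψ a - ⟪G a, b - a⟫ := by
  set v := G b - G a with hv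
  set z := b - (1 / ℓ) • v with hz
  have h1 : ψ a + ⟪G a, z - a⟫ ≤ ψ z := iag_foc hG hc a z
  have h2 : ψ z ≤ ψ b + ⟪G b, z - b⟫ + ℓ / 2 * ‖z - b‖ ^ 2 := hdesc b z
  have hzb : z - b = -((1 / ℓ) • v) := by rw [hz]; abel
  have e1 : ⟪G b, z - b⟫ = -(1 / ℓ * ⟪G b, v⟫) := by
    rw [hzb, inner_neg_right, real_inner_smul_right]
  have e2 : ℓ / 2 * ‖z - b‖ ^ 2 = 1 / (2 * ℓ) * ‖v‖ ^ 2 := by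
    rw [hzb, norm_neg, norm_smul, Real.norm_eq_abs, abs_of_pos (by positivity : (0:ℝ) < 1/ℓ)]
    field_simp
  have e3 : ⟪G a, z - a⟫ = ⟪G a, b - a⟫ - 1 / ℓ * ⟪G a, v⟫ := by
    have : z - a = (b - a) - (1 / ℓ) • v := by rw [hz]; abel
    rw [this, inner_sub_right, real_inner_smul_right]
  have e4 : ⟪G b, v⟫ - ⟪G a, v⟫ = ‖v‖ ^ 2 := by
    rw [← inner_sub_left, ← hv, real_inner_self_eq_norm_sq]
  have e5 : 1 / ℓ * ⟪G b, v⟫ - 1 / ℓ * ⟪G a, v⟫ = 1 / ℓ * ‖v‖ ^ 2 := by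
    rw [← mul_sub, e4]
  have e6 : 1 / ℓ * ‖v‖ ^ 2 = 2 * (1 / (2 * ℓ) * ‖v‖ ^ 2) := by
    field_simp
  linarith

/-- cocoercivity (Baillon–Haddad) -/
lemma iag_coco {ψ : H → ℝ} {G : H → H} (hG : ∀ p, HasGradientAt ψ (G p) p)
    (hc : ConvexOn ℝ Set.univ ψ) {ℓ : ℝ} (hℓ : 0 < ℓ)
    (hdesc : ∀ a b, ψ b ≤ ψ a + ⟪G a, b - a⟫ + ℓ / 2 * ‖b - a‖ ^ 2) (a b : H) :
    1 / ℓ * ‖G a - G b‖ ^ 2 ≤ ⟪G a - G b, a - b⟫ := by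
  have h1 := iag_coco_half hG hc hℓ hdesc a b
  have h2 := iag_coco_half hG hc hℓ hdesc b a
  have hn : ‖G b - G a‖ = ‖G a - G b‖ := norm_sub_rev _ _
  rw [hn] at h1
  have hin : ⟪G a - G b, a - b⟫ = -⟪G a, b - a⟫ - ⟪G b, a - b⟫ := by
    rw [inner_sub_left]
    have hba : (b - a : H) = -(a - b) := by abel
    rw [hba, inner_neg_right]
    ring
  have e6 : 1 / ℓ * ‖G a - G b‖ ^ 2 = 2 * (1 / (2 * ℓ) * ‖G a - G b‖ ^ 2) := by
    field_simp
  linarith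

end Helpers
set_option maxHeartbeats 1000000 in
theorem iag_dist_recursion
    (n m : ℕ) (hm : 1 ≤ m)
    (f : Fin m → EuclideanSpace ℝ (Fin n) → ℝ)
    (Li : Fin m → ℝ) (hLi : ∀ i, 0 ≤ Li i)
    (L : ℝ) (hL : L = ∑ i, Li i)
    (hconv : ∀ i, ConvexOn ℝ Set.univ (f i))
    (hdiff : ∀ i, Differentiable ℝ (f i))
    (hlip : ∀ i y z, ‖gradient (f i) y - gradient (f i) z‖ ≤ Li i * ‖y - z‖)
    (K : ℕ) (hK : 1 ≤ K)
    (τ : Fin m → ℕ → ℕ)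
    (hτ : ∀ i k, k - K ≤ τ i k ∧ τ i k ≤ k)
    (hτ0 : ∀ i, τ i 0 = 0)
    (F : EuclideanSpace ℝ (Fin n) → ℝ) (hF : F = fun y => ∑ i, f i y)
    (x g e : ℕ → EuclideanSpace ℝ (Fin n))
    (hg : ∀ k, g k = ∑ i, gradient (f i) (x (τ i k)))
    (he : ∀ k, e k = g k - gradient F (x k))
    (γ : ℝ) (hγ : 0 < γ)
    (hx : ∀ k, x (k + 1) = x k - γ • g k)
    (μ : ℝ) (hμ : 0 < μ) (hμL : μ ≤ L)
    (hsc : ConvexOn ℝ Set.univ (fun y => F y - μ / 2 * ‖y‖ ^ 2))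
    (xs : EuclideanSpace ℝ (Fin n))
    (hmin : ∀ y, F xs ≤ F y) (hgxs : gradient F xs = 0)
    (hγle : γ ≤ 2 / (μ + L)) :
    ∀ k, ‖x (k + 1) - xs‖ ^ 2 ≤ (1 - 2 * γ * (μ * L) / (μ + L)) * ‖x k - xs‖ ^ 2 +
      (γ ^ 2 * ‖e k‖ ^ 2 - 2 * γ * ⟪x k - xs - γ • gradient F (x k), e k⟫) := by
  intro k
  have hS : (0:ℝ) < μ + L := by linarith
  have hL0 : (0:ℝ) ≤ L := le_trans hμ.le hμL
  -- gradient of F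
  have hFgrad : ∀ p, HasGradientAt F (∑ i, gradient (f i) p) p := by
    intro p
    rw [hasGradientAt_iff_hasFDerivAt, map_sum, hF]
    exact HasFDerivAt.fun_sum fun i _ =>
      hasGradientAt_iff_hasFDerivAt.mp ((hdiff i p).hasGradientAt)
  have hgradF : ∀ p, gradient F p = ∑ i, gradient (f i) p := fun p => (hFgrad p).gradient
  have hFg : ∀ p, HasGradientAt F (gradient F p) p := by
    intro p; rw [hgradF p]; exact hFgrad p
  have hFlip : ∀ p q, ‖gradient F p - gradient F q‖ ≤ L * ‖p - q‖ := by
    intro p q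
    rw [hgradF p, hgradF q, ← Finset.sum_sub_distrib]
    calc ‖∑ i, (gradient (f i) p - gradient (f i) q)‖
        ≤ ∑ i, ‖gradient (f i) p - gradient (f i) q‖ := norm_sum_le _ _
      _ ≤ ∑ i, Li i * ‖p - q‖ := Finset.sum_le_sum fun i _ => hlip i p q
      _ = L * ‖p - q‖ := by rw [← Finset.sum_mul, hL]
  -- gradient of the square-norm part
  have hsq : ∀ p : EuclideanSpace ℝ (Fin n),
      HasGradientAt (fun y : EuclideanSpace ℝ (Fin n) => μ / 2 * ‖y‖ ^ 2) (μ • p) p := by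
    intro p
    have h1 : HasFDerivAt (fun y : EuclideanSpace ℝ (Fin n) => ⟪y, y⟫)
        ((fderivInnerCLM ℝ (p, p)).comp
          ((ContinuousLinearMap.id ℝ _).prod (ContinuousLinearMap.id ℝ _))) p :=
      HasFDerivAt.inner ℝ (hasFDerivAt_id p) (hasFDerivAt_id p)
    have h2 := h1.const_mul (μ / 2)
    have heq : (fun y : EuclideanSpace ℝ (Fin n) => μ / 2 * ⟪y, y⟫)
        = fun y => μ / 2 * ‖y‖ ^ 2 := by
      funext y; rw [real_inner_self_eq_norm_sq]
    have h3 : (InnerProductSpace.toDual ℝ (EuclideanSpace ℝ (Fin n))) (μ • p)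
        = (μ / 2) • ((fderivInnerCLM ℝ (p, p)).comp
          ((ContinuousLinearMap.id ℝ _).prod (ContinuousLinearMap.id ℝ _))) := by
      ext w
      simp only [InnerProductSpace.toDual_apply_apply, ContinuousLinearMap.smul_apply,
        ContinuousLinearMap.comp_apply, ContinuousLinearMap.prod_apply,
        ContinuousLinearMap.id_apply, fderivInnerCLM_apply, real_inner_smul_left]
      rw [real_inner_comm w p]
      simp only [smul_eq_mul]
      ring
    rw [hasGradientAt_iff_hasFDerivAt, h3, ← heq]
    exact h2
  -- h and its gradient
  set h : EuclideanSpace ℝ (Fin n) → ℝ := fun y => F y - μ / 2 * ‖y‖ ^ 2 with hh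
  set Gh : EuclideanSpace ℝ (Fin n) → EuclideanSpace ℝ (Fin n) :=
    fun p => gradient F p - μ • p with hGhdef
  have hGh : ∀ p, HasGradientAt h (Gh p) p := by
    intro p
    have h1 := hasGradientAt_iff_hasFDerivAt.mp (hFg p)
    have h2 := hasGradientAt_iff_hasFDerivAt.mp (hsq p)
    have h12 := h1.sub h2
    rw [hasGradientAt_iff_hasFDerivAt]
    simp only [hGhdef, hh]
    rw [map_sub]
    exact h12
  -- descent lemmas
  have hdF : ∀ a b, F b ≤ F a + ⟪gradient F a, b - a⟫ + L / 2 * ‖b - a‖ ^ 2 :=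
    iag_descent hFg hL0 hFlip
  have hdh : ∀ a b, h b ≤ h a + ⟪Gh a, b - a⟫ + (L - μ) / 2 * ‖b - a‖ ^ 2 := by
    intro a b
    simp only [hh, hGhdef]
    have key := hdF a b
    have e1 : ⟪gradient F a - μ • a, b - a⟫ = ⟪gradient F a, b - a⟫ - μ * ⟪a, b - a⟫ := by
      rw [inner_sub_left, real_inner_smul_left]
    have e2 : μ * ‖b - a‖ ^ 2 = μ * ‖b‖ ^ 2 - 2 * (μ * ⟪a, b⟫) + μ * ‖a‖ ^ 2 := by
      rw [norm_sub_sq_real, real_inner_comm b a]; ring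
    have e3 : μ * ⟪a, b - a⟫ = μ * ⟪a, b⟫ - μ * ‖a‖ ^ 2 := by
      rw [inner_sub_right, real_inner_self_eq_norm_sq]; ring
    linarith [key, e1, e2, e3]
  -- abbreviations
  set u : EuclideanSpace ℝ (Fin n) := x k - xs with hu
  set v : EuclideanSpace ℝ (Fin n) := gradient F (x k) with hvdef
  have hGhsub : Gh (x k) - Gh xs = v - μ • u := by
    simp only [hGhdef]
    rw [hgxs, hvdef, hu]
    module
  have hexp2 : ⟪v - μ • u, u⟫ = ⟪v, u⟫ - μ * ‖u‖ ^ 2 := by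
    rw [inner_sub_left, real_inner_smul_left, real_inner_self_eq_norm_sq]
  -- KEY inequality
  have hKEY : μ * L * ‖u‖ ^ 2 + ‖v‖ ^ 2 ≤ (μ + L) * ⟪v, u⟫ := by
    have hml : ‖v‖ ≤ L * ‖u‖ := by
      have hfl := hFlip (x k) xs
      rw [hgxs, sub_zero, ← hvdef, ← hu] at hfl
      exact hfl
    rcases eq_or_lt_of_le hμL with heq | hlt
    · -- μ = L
      have f1 := iag_foc hGh hsc (x k) xs
      have f2 := iag_foc hGh hsc xs (x k)
      have hid : ⟪Gh (x k) - Gh xs, u⟫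
          = -⟪Gh (x k), xs - x k⟫ - ⟪Gh xs, x k - xs⟫ := by
        rw [hu, inner_sub_left]
        have hba : (xs - x k : EuclideanSpace ℝ (Fin n)) = -(x k - xs) := by abel
        rw [hba, inner_neg_right]
        ring
      have hmono : 0 ≤ ⟪Gh (x k) - Gh xs, u⟫ := by rw [hid]; linarith
      rw [hGhsub, hexp2] at hmono
      have h1 : μ * ‖u‖ ^ 2 ≤ ⟪v, u⟫ := by linarith
      have h2 : ‖v‖ ^ 2 ≤ L ^ 2 * ‖u‖ ^ 2 := by
        nlinarith [hml, norm_nonneg v, norm_nonneg u]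
      rw [← heq] at h2 ⊢
      nlinarith [h1, h2, hμ.le, mul_le_mul_of_nonneg_left h1 hμ.le]
    · -- μ < L
      have hℓ : 0 < L - μ := by linarith
      have hco := iag_coco hGh hsc hℓ hdh (x k) xs
      rw [hGhsub, ← hu] at hco
      have hexp1 : ‖v - μ • u‖ ^ 2 = ‖v‖ ^ 2 - 2 * (μ * ⟪v, u⟫) + μ ^ 2 * ‖u‖ ^ 2 := by
        rw [norm_sub_sq_real, real_inner_smul_right, norm_smul, mul_pow,
          Real.norm_eq_abs, sq_abs]
      have hmul : ‖v - μ • u‖ ^ 2 ≤ (L - μ) * ⟪v - μ • u, u⟫ := by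
        have h2 := mul_le_mul_of_nonneg_left hco (le_of_lt hℓ)
        rwa [← mul_assoc, mul_one_div_cancel (ne_of_gt hℓ), one_mul] at h2
      rw [hexp1, hexp2] at hmul
      nlinarith [hmul]
  -- final assembly
  have hgk : g k = e k + v := by
    rw [he k, ← hvdef]; abel
  have hstep : x (k + 1) - xs = (u - γ • v) - γ • (e k) := by
    rw [hx k, hgk, hu]
    module
  rw [hstep]
  have expand : ‖(u - γ • v) - γ • (e k)‖ ^ 2
      = ‖u - γ • v‖ ^ 2 - 2 * γ * ⟪u - γ • v, e k⟫ + γ ^ 2 * ‖e k‖ ^ 2 := by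
    rw [norm_sub_sq_real, real_inner_smul_right, norm_smul, mul_pow,
      Real.norm_eq_abs, sq_abs]
    ring
  rw [expand]
  have main : ‖u - γ • v‖ ^ 2 ≤ (1 - 2 * γ * (μ * L) / (μ + L)) * ‖u‖ ^ 2 := by
    have hexp : ‖u - γ • v‖ ^ 2 = ‖u‖ ^ 2 - 2 * (γ * ⟪v, u⟫) + γ ^ 2 * ‖v‖ ^ 2 := by
      rw [norm_sub_sq_real, real_inner_smul_right, norm_smul, mul_pow,
        Real.norm_eq_abs, sq_abs, real_inner_comm u v]
    have hγS : γ * (μ + L) ≤ 2 := (le_div_iff₀ hS).mp hγle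
    have hQ : (0:ℝ) ≤ ‖v‖ ^ 2 := sq_nonneg _
    have hmul2 : 2 * γ * (μ * L) * ‖u‖ ^ 2
        ≤ 2 * γ * ((μ + L) * ⟪v, u⟫) - γ ^ 2 * ‖v‖ ^ 2 * (μ + L) := by
      nlinarith [mul_le_mul_of_nonneg_left hKEY (by positivity : (0:ℝ) ≤ 2 * γ),
        mul_nonneg hγ.le hQ, hγS, hγ]
    rw [hexp, sub_mul, one_mul]
    have hdiv : 2 * γ * (μ * L) / (μ + L) * ‖u‖ ^ 2
        = 2 * γ * (μ * L) * ‖u‖ ^ 2 / (μ + L) := by ring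
    rw [hdiv]
    have hfin : 2 * γ * (μ * L) * ‖u‖ ^ 2 / (μ + L) ≤ 2 * (γ * ⟪v, u⟫) - γ ^ 2 * ‖v‖ ^ 2 := by
      rw [div_le_iff₀ hS]
      nlinarith [hmul2]
    linarith
  linarith [main]
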